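/- For every integer n ≥ 1, T_n(1) = (2n−1)!!, the double factorial of 2n−1 (that is, the product 1·3·5⋯(2n−1)). -/
import Mathlib


/-- The numbers T(n,k) defined by T(1,1) = 1, T(1,k) = 0 for k ≠ 1, and the
recurrence T(n+1,k) = k·T(n,k) + T(n,k-1) + (2n-k+2)·T(n,k-2) for n ≥ 1.
(The value at n = 0 encodes T_0(x) = 1.) -/
def Tc : ℕ → ℤ → ℤ
  | 0, k => if k = 0 then 1 else 0
  | 1, k => if k = 1 then 1 else 0
  | (n+2), k => k * Tc (n+1) k + Tc (n+1) (k-1) + (2*((n : ℤ)+1) - k + 2) * Tc (n+1) (k-2)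

/-- The polynomial T_n(x) = ∑_{k=1}^{2n-1} T(n,k) x^k for n ≥ 1, with T_0(x) = 1. -/
noncomputable def Tpoly (n : ℕ) : Polynomial ℤ :=
  if n = 0 then 1 else ∑ k ∈ Finset.Icc 1 (2*n - 1), Polynomial.C (Tc n k) * Polynomial.X ^ k

lemma Tzero : ∀ (n : ℕ), 1 ≤ n → ∀ k : ℤ, (k ≤ 0 ∨ 2*(n:ℤ) ≤ k) → Tc n k = 0
  | 1, _, k, h => by
    have : k ≠ 1 := by omega
    simp [Tc, this]
  | (n+2), _, k, h => by
    have h1 := Tzero (n+1) (by omega) k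
    have h2 := Tzero (n+1) (by omega) (k-1)
    have h3 := Tzero (n+1) (by omega) (k-2)
    push_cast at h h1 h2 h3
    simp only [Tc]
    rcases h with h | h
    · rw [h1 (Or.inl (by omega)), h2 (Or.inl (by omega)), h3 (Or.inl (by omega))]; ring
    · rw [h1 (Or.inr (by omega)), h2 (Or.inr (by omega)), h3 (Or.inr (by omega))]; ring

lemma key : ∀ n : ℕ, 1 ≤ n →
    (∑ k ∈ Finset.Icc (1:ℤ) (2*(n:ℤ)-1), Tc n k) = (Nat.doubleFactorial (2*n - 1) : ℤ) := by
  intro n hn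
  induction n, hn using Nat.le_induction with
  | base => decide
  | succ n hn ih =>
    obtain ⟨m, rfl⟩ : ∃ m, n = m + 1 := ⟨n - 1, by omega⟩
    rw [show ((2:ℤ)*((m+1+1:ℕ):ℤ)-1) = 2*(m:ℤ)+3 from by push_cast; ring]
    rw [show (∑ k ∈ Finset.Icc (1:ℤ) (2*(m:ℤ)+3), Tc (m+1+1) k)
        = ∑ k ∈ Finset.Icc (1:ℤ) (2*(m:ℤ)+3),
            ((k : ℤ) * Tc (m+1) k + Tc (m+1) (k-1) + (2*((m:ℤ)+1) - k + 2) * Tc (m+1) (k-2))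
      from Finset.sum_congr rfl (fun k _ => rfl)]
    rw [Finset.sum_add_distrib, Finset.sum_add_distrib]
    have hn1 : (1:ℕ) ≤ m + 1 := by omega
    -- A
    have hA : (∑ k ∈ Finset.Icc (1:ℤ) (2*(m:ℤ)+3), (k : ℤ) * Tc (m+1) k)
        = ∑ k ∈ Finset.Icc (1:ℤ) (2*(m:ℤ)+1), (k : ℤ) * Tc (m+1) k := by
      symm
      apply Finset.sum_subset
      · intro x; simp only [Finset.mem_Icc]; omega
      · intro x hx hx'
        simp only [Finset.mem_Icc] at hx hx'
        rw [Tzero (m+1) hn1 x (Or.inr (by push_cast; omega))]; ring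
    -- B
    have hB : (∑ k ∈ Finset.Icc (1:ℤ) (2*(m:ℤ)+3), Tc (m+1) (k-1))
        = ∑ k ∈ Finset.Icc (1:ℤ) (2*(m:ℤ)+1), Tc (m+1) k := by
      rw [show (∑ k ∈ Finset.Icc (1:ℤ) (2*(m:ℤ)+3), Tc (m+1) (k-1))
          = ∑ k ∈ Finset.Icc (0:ℤ) (2*(m:ℤ)+2), Tc (m+1) k from
        Finset.sum_nbij' (i := fun k => k - 1) (j := fun k => k + 1)
          (by intro a ha; simp only [Finset.mem_Icc] at *; omega)
          (by intro a ha; simp only [Finset.mem_Icc] at *; omega)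
          (by intros; ring) (by intros; ring) (by intros; rfl)]
      symm
      apply Finset.sum_subset
      · intro x; simp only [Finset.mem_Icc]; omega
      · intro x hx hx'
        simp only [Finset.mem_Icc] at hx hx'
        exact Tzero (m+1) hn1 x (by push_cast; omega)
    -- C
    have hC : (∑ k ∈ Finset.Icc (1:ℤ) (2*(m:ℤ)+3), (2*((m:ℤ)+1) - k + 2) * Tc (m+1) (k-2))
        = ∑ k ∈ Finset.Icc (1:ℤ) (2*(m:ℤ)+1), (2*((m:ℤ)+1) - k) * Tc (m+1) k := by
      rw [show (∑ k ∈ Finset.Icc (1:ℤ) (2*(m:ℤ)+3), (2*((m:ℤ)+1) - k + 2) * Tc (m+1) (k-2))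
          = ∑ k ∈ Finset.Icc (-1:ℤ) (2*(m:ℤ)+1), (2*((m:ℤ)+1) - k) * Tc (m+1) k from
        Finset.sum_nbij' (i := fun k => k - 2) (j := fun k => k + 2)
          (by intro a ha; simp only [Finset.mem_Icc] at *; omega)
          (by intro a ha; simp only [Finset.mem_Icc] at *; omega)
          (by intros; ring) (by intros; ring) (by intro a _; ring_nf)]
      symm
      apply Finset.sum_subset
      · intro x; simp only [Finset.mem_Icc]; omega
      · intro x hx hx'
        simp only [Finset.mem_Icc] at hx hx'
        rw [Tzero (m+1) hn1 x (Or.inl (by omega))]; ring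
    rw [hA, hB, hC]
    have hcomb : (∑ k ∈ Finset.Icc (1:ℤ) (2*(m:ℤ)+1), (k : ℤ) * Tc (m+1) k)
        + (∑ k ∈ Finset.Icc (1:ℤ) (2*(m:ℤ)+1), Tc (m+1) k)
        + (∑ k ∈ Finset.Icc (1:ℤ) (2*(m:ℤ)+1), (2*((m:ℤ)+1) - k) * Tc (m+1) k)
        = (2*(m:ℤ)+3) * ∑ k ∈ Finset.Icc (1:ℤ) (2*(m:ℤ)+1), Tc (m+1) k := by
      rw [← Finset.sum_add_distrib, ← Finset.sum_add_distrib, Finset.mul_sum]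
      apply Finset.sum_congr rfl
      intro k _; ring
    rw [hcomb]
    have hih : (∑ k ∈ Finset.Icc (1:ℤ) (2*(m:ℤ)+1), Tc (m+1) k)
        = (Nat.doubleFactorial (2*(m+1) - 1) : ℤ) := by
      rw [← ih]
      apply Finset.sum_congr
      · congr 1; push_cast; ring
      · intros; rfl
    rw [hih]
    have : 2 * (m + 1 + 1) - 1 = (2*m+1) + 2 := by omega
    rw [this, Nat.doubleFactorial_add_two]
    have : 2 * (m + 1) - 1 = 2*m+1 := by omega
    rw [this]
    push_cast
    ring

lemma natsum (N : ℕ) (f : ℤ → ℤ) :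
    (∑ k ∈ Finset.Icc 1 N, f (k : ℤ)) = ∑ k ∈ Finset.Icc (1:ℤ) (N:ℤ), f k := by
  apply Finset.sum_nbij' (i := fun k : ℕ => (k : ℤ)) (j := fun k : ℤ => k.toNat)
  · intro a ha; simp only [Finset.mem_Icc] at *; omega
  · intro a ha; simp only [Finset.mem_Icc] at *; omega
  · intro a ha; simp only [Finset.mem_Icc] at ha; omega
  · intro a ha; simp only [Finset.mem_Icc] at ha; omega
  · intros; rfl

/-- For n ≥ 1, T_n(1) = (2n-1)!!, the double factorial of 2n-1. -/
theorem stmt2 (n : ℕ) (hn : 1 ≤ n) :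
    Polynomial.eval (1 : ℤ) (Tpoly n) = (Nat.doubleFactorial (2*n - 1) : ℤ) := by
  have hn' : n ≠ 0 := by omega
  rw [Tpoly, if_neg hn', Polynomial.eval_finset_sum]
  simp only [Polynomial.eval_mul, Polynomial.eval_C, Polynomial.eval_pow, Polynomial.eval_X,
    one_pow, mul_one]
  rw [natsum (2*n-1) (fun k => Tc n k), ← key n hn]
  apply Finset.sum_congr
  · congr 1; omega
  · intros; rfl
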